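/- For every multiple-closed set M of monomials in y_1,...,y_n there exists a finite Janet complete set J of monomials with M equal to the set of monomial multiples of J; i.e., M equals the disjoint union over m ∈ J of the cones Mon(μ(m,J))·m. -/

import Mathlib

/-- Janet multiplicative variables: for `m ∈ J` (monomials identified with
exponent vectors in `ℕⁿ`), the variable `k` is multiplicative for `m` iff the
exponent `m k` is maximal among the exponents `j k` of those `j ∈ J` agreeing
with `m` in all earlier positions. -/
def JanetMultiplicative (n : ℕ) (J : Finset (Fin n → ℕ)) (m : Fin n → ℕ)
    (k : Fin n) : Prop :=
  ∀ j ∈ J, (∀ l : Fin n, l < k → j l = m l) → j k ≤ m k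

/-- The Janet cone of `m` with respect to `J`: all products of `m` with
monomials involving only multiplicative variables of `m`. -/
def JanetCone (n : ℕ) (J : Finset (Fin n → ℕ)) (m : Fin n → ℕ) :
    Set (Fin n → ℕ) :=
  { x | ∃ r : Fin n → ℕ,
      (∀ k : Fin n, r k ≠ 0 → JanetMultiplicative n J m k) ∧ x = r + m }

/-- Every element of a set of exponent vectors lies above a minimal element,
bounded by a fixed vector `d` (a consequence of Dickson's lemma). -/
lemma janet_exists_bound (n : ℕ) (M : Set (Fin n → ℕ)) :
    ∃ d : Fin n → ℕ, ∀ x ∈ M, ∃ g ∈ M, g ≤ x ∧ g ≤ d := by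
  classical
  set Min : Set (Fin n → ℕ) := {g | g ∈ M ∧ ∀ y ∈ M, y ≤ g → y = g} with hMin
  have hanti : IsAntichain (· ≤ ·) Min := by
    intro a ha b hb hne hab
    exact hne (hb.2 a ha.1 hab)
  have hpwo : Min.IsPWO :=
    Set.isPWO_of_wellQuasiOrderedLE Min
  have hfin : Min.Finite := hanti.finite_of_partiallyWellOrderedOn hpwo
  refine ⟨fun k => hfin.toFinset.sup (fun g => g k), ?_⟩
  have key : ∀ N : ℕ, ∀ x ∈ M, (∑ i, x i) ≤ N → ∃ g ∈ Min, g ≤ x := by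
    intro N
    induction N with
    | zero =>
      intro x hx h
      have hx0 : ∀ i, x i = 0 := by
        intro i
        have h2 : x i ≤ ∑ j, x j :=
          Finset.single_le_sum (fun j _ => Nat.zero_le (x j)) (Finset.mem_univ i)
        omega
      refine ⟨x, ⟨hx, fun y hy hyx => funext fun i => ?_⟩, le_refl x⟩
      have h1 : y i ≤ x i := hyx i
      have h2 := hx0 i
      omega
    | succ N ih =>
      intro x hx hsum
      by_cases hmin : ∀ y ∈ M, y ≤ x → y = x
      · exact ⟨x, ⟨hx, hmin⟩, le_rfl⟩
      · push_neg at hmin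
        obtain ⟨y, hyM, hyx, hne⟩ := hmin
        have hex : ∃ i, y i < x i := by
          by_contra h
          push_neg at h
          exact hne (funext fun i => le_antisymm (hyx i) (h i))
        obtain ⟨i0, hi0⟩ := hex
        have hlt : (∑ i, y i) < ∑ i, x i := by
          refine Finset.sum_lt_sum (fun i _ => hyx i) ⟨i0, Finset.mem_univ i0, hi0⟩
        obtain ⟨g, hg, hgy⟩ := ih y hyM (by omega)
        exact ⟨g, hg, hgy.trans hyx⟩
  intro x hx
  obtain ⟨g, hg, hgx⟩ := key (∑ i, x i) x hx le_rfl
  refine ⟨g, hg.1, hgx, fun k => ?_⟩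
  exact Finset.le_sup (f := fun g => g k) (hfin.mem_toFinset.2 hg)

/-- For every multiple-closed set `M` of monomials there is a finite Janet
complete set `J` whose set of monomial multiples equals `M`, i.e. `M` is the
disjoint union of the Janet cones of the elements of `J`: every element of `M`
lies in exactly one cone. -/
theorem exists_janet_complete_generating_set (n : ℕ) (M : Set (Fin n → ℕ))
    (hM : ∀ m ∈ M, ∀ r : Fin n → ℕ, r + m ∈ M) :
    ∃ J : Finset (Fin n → ℕ),
      M = { x | ∃ g ∈ J, ∃ r : Fin n → ℕ, x = r + g } ∧
      (∀ x ∈ M, ∃! m, m ∈ J ∧ x ∈ JanetCone n J m) := by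
  classical
  obtain ⟨d, hd⟩ := janet_exists_bound n M
  -- J is the set of elements of M lying in the box bounded by d
  have hboxfin : (M ∩ {x : Fin n → ℕ | x ≤ d}).Finite := by
    refine Set.Finite.subset (Set.finite_Icc 0 d) ?_
    intro x hx
    exact Set.mem_Icc.2 ⟨fun i => Nat.zero_le _, hx.2⟩
  set J : Finset (Fin n → ℕ) := hboxfin.toFinset with hJdef
  have hJmem : ∀ x, x ∈ J ↔ x ∈ M ∧ x ≤ d := by
    intro x; rw [hJdef, Set.Finite.mem_toFinset]; rfl
  -- the truncation of x by d
  have htrunc : ∀ x ∈ M, (fun k => min (x k) (d k)) ∈ J ∧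
      (fun k => min (x k) (d k)) ≤ x := by
    intro x hx
    obtain ⟨g, hgM, hgx, hgd⟩ := hd x hx
    have hle : g ≤ fun k => min (x k) (d k) := fun k => le_min (hgx k) (hgd k)
    have hmem : (fun k => min (x k) (d k)) ∈ M := by
      have := hM g hgM (fun k => min (x k) (d k) - g k)
      have heq : ((fun k => min (x k) (d k) - g k) + g) =
          (fun k => min (x k) (d k)) := by
        funext k
        simp only [Pi.add_apply]
        have h1 : g k ≤ x k := hgx k
        have h2 : g k ≤ d k := hgd k
        omega
      rwa [heq] at this
    exact ⟨(hJmem _).2 ⟨hmem, fun k => min_le_right _ _⟩, fun k => min_le_left _ _⟩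
  refine ⟨J, ?_, ?_⟩
  · ext x
    constructor
    · intro hx
      obtain ⟨hmemJ, hlex⟩ := htrunc x hx
      refine ⟨_, hmemJ, fun k => x k - min (x k) (d k), ?_⟩
      funext k
      simp only [Pi.add_apply]
      omega
    · rintro ⟨g, hgJ, r, rfl⟩
      exact hM g ((hJmem g).1 hgJ).1 r
  · intro x hx
    obtain ⟨hmemJ, hlex⟩ := htrunc x hx
    set mx : Fin n → ℕ := fun k => min (x k) (d k) with hmx
    refine ⟨mx, ⟨hmemJ, ?_⟩, ?_⟩
    · -- x lies in the cone of mx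
      refine ⟨fun k => x k - mx k, ?_, ?_⟩
      · intro k hk
        have hk' : x k - mx k ≠ 0 := hk
        have hxk : mx k ≤ x k := hlex k
        have hmxk : mx k = min (x k) (d k) := rfl
        intro j hj _
        have hjd : j k ≤ d k := ((hJmem j).1 hj).2 k
        omega
      · funext k
        show x k = x k - mx k + mx k
        have h1 : mx k ≤ x k := hlex k
        omega
    · -- uniqueness
      rintro m ⟨hmJ, r, hr, rfl⟩
      have hmd : m ≤ d := ((hJmem m).1 hmJ).2
      have H : ∀ N : ℕ, ∀ k : Fin n, (k : ℕ) < N → m k = mx k := by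
        intro N
        induction N with
        | zero => intro k hk; omega
        | succ N ih =>
          intro k hk
          by_contra hne
          have hmlex : m k ≤ (r + m) k := Nat.le_add_left _ _
          have hmxk : mx k = min ((r + m) k) (d k) := rfl
          have hmdk : m k ≤ d k := hmd k
          have hmk_lt : m k < mx k := by omega
          have hrk : r k ≠ 0 := by
            have h3 : mx k ≤ (r + m) k := min_le_left _ _
            simp only [Pi.add_apply] at h3 hmk_lt ⊢
            omega
          have hmult := hr k hrk
          have hagree : ∀ l : Fin n, l < k → mx l = m l := by
            intro l hl
            have : (l : ℕ) < N := by
              have := (Fin.lt_iff_val_lt_val).1 hl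
              omega
            exact (ih l this).symm
          have := hmult mx hmemJ hagree
          omega
      funext k
      exact H (k + 1) k (Nat.lt_succ_self _)
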